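/- Let F: Sym(N) → ℝ satisfy uniform ellipticity with constants 0 < a ≤ A and F(0)=0, and define, for α ≥ 0 and p ∈ ℝ^N, Θ_α(p) = Diag(|p₁|^{α/2}, ..., |p_N|^{α/2}). Then there exists a constant c depending only on A, N such that for all p, q ∈ ℝ^N and all M ∈ Sym(N): |F(Θ_α(p) M Θ_α(p)) - F(Θ_α(q) M Θ_α(q))| ≤ c (|p|^{α/2} + |q|^{α/2}) (∑ᵢ | |pᵢ|^{α/2} - |qᵢ|^{α/2} |) ‖M‖. -/

import Mathlib

open Matrix

/-- `Θ_α(p)` is the diagonal matrix with entries `|pᵢ|^{α/2}`. -/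
noncomputable def Theta {N : ℕ} (α : ℝ) (p : Fin N → ℝ) : Matrix (Fin N) (Fin N) ℝ :=
  Matrix.diagonal fun i => |p i| ^ (α / 2)

private lemma isHerm_of_isSymm {n : ℕ} {M : Matrix (Fin n) (Fin n) ℝ} (h : M.IsSymm) :
    M.IsHermitian := by
  unfold Matrix.IsHermitian
  rw [Matrix.conjTranspose_eq_transpose_of_trivial]
  exact h

private lemma entry_le_sqrt {n : ℕ} (D : Matrix (Fin n) (Fin n) ℝ) (i j : Fin n) :
    |D i j| ≤ Real.sqrt (∑ i, ∑ j, (D i j) ^ 2) := by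
  rw [← Real.sqrt_sq_eq_abs]
  apply Real.sqrt_le_sqrt
  calc (D i j) ^ 2 ≤ ∑ j', (D i j') ^ 2 :=
        Finset.single_le_sum (f := fun j' => (D i j') ^ 2) (fun _ _ => sq_nonneg _)
          (Finset.mem_univ j)
    _ ≤ ∑ i', ∑ j', (D i' j') ^ 2 :=
        Finset.single_le_sum (f := fun i' => ∑ j', (D i' j') ^ 2)
          (fun i' _ => Finset.sum_nonneg fun _ _ => sq_nonneg _) (Finset.mem_univ i)

private lemma sqrt_sum_sq_le {n : ℕ} (f g : Matrix (Fin n) (Fin n) ℝ) (C : ℝ) (hC : 0 ≤ C)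
    (h : ∀ i j, |f i j| ≤ C * |g i j|) :
    Real.sqrt (∑ i, ∑ j, (f i j) ^ 2) ≤ C * Real.sqrt (∑ i, ∑ j, (g i j) ^ 2) := by
  have h1 : (∑ i, ∑ j, (f i j) ^ 2) ≤ C ^ 2 * ∑ i, ∑ j, (g i j) ^ 2 := by
    rw [Finset.mul_sum]
    refine Finset.sum_le_sum fun i _ => ?_
    rw [Finset.mul_sum]
    refine Finset.sum_le_sum fun j _ => ?_
    calc (f i j) ^ 2 = |f i j| ^ 2 := (sq_abs _).symm
      _ ≤ (C * |g i j|) ^ 2 := by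
          apply pow_le_pow_left₀ (abs_nonneg _) (h i j)
      _ = C ^ 2 * (g i j) ^ 2 := by rw [mul_pow, sq_abs]
  calc Real.sqrt (∑ i, ∑ j, (f i j) ^ 2) ≤ Real.sqrt (C ^ 2 * ∑ i, ∑ j, (g i j) ^ 2) :=
        Real.sqrt_le_sqrt h1
    _ = C * Real.sqrt (∑ i, ∑ j, (g i j) ^ 2) := by
        rw [Real.sqrt_mul (sq_nonneg C), Real.sqrt_sq hC]

/-- One-sided Lipschitz estimate from uniform ellipticity. -/
private lemma lip {n : ℕ} {a A : ℝ} (ha : 0 < a) (haA : a ≤ A)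
    {F : Matrix (Fin n) (Fin n) ℝ → ℝ}
    (hF : ∀ M P : Matrix (Fin n) (Fin n) ℝ, M.IsSymm → P.PosSemidef →
      a * P.trace ≤ F (M + P) - F M ∧ F (M + P) - F M ≤ A * P.trace)
    (X Y : Matrix (Fin n) (Fin n) ℝ) (hX : X.IsSymm) (hY : Y.IsSymm) :
    F X - F Y ≤ 2 * A * n * Real.sqrt (∑ i, ∑ j, (X i j - Y i j) ^ 2) := by
  have hA : 0 < A := lt_of_lt_of_le ha haA
  set D : Matrix (Fin n) (Fin n) ℝ := X - Y with hD
  set t : ℝ := Real.sqrt (∑ i, ∑ j, (X i j - Y i j) ^ 2) with ht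
  have ht0 : 0 ≤ t := Real.sqrt_nonneg _
  have hDsym : D.IsSymm := hX.sub hY
  -- the matrix D + t • 1 is positive semidefinite
  have hPSD : (D + t • (1 : Matrix (Fin n) (Fin n) ℝ)).PosSemidef := by
    rw [Matrix.posSemidef_iff_dotProduct_mulVec]
    constructor
    · refine (isHerm_of_isSymm hDsym).add ?_
      simp [Matrix.IsHermitian, Matrix.conjTranspose_smul]
    · intro x
      have hx : star x = x := by simp
      rw [hx, Matrix.add_mulVec, dotProduct_add, Matrix.smul_mulVec,
        Matrix.one_mulVec, dotProduct_smul]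
      have hquad : x ⬝ᵥ D *ᵥ x = ∑ r : Fin n × Fin n, D r.1 r.2 * (x r.1 * x r.2) := by
        rw [Fintype.sum_prod_type]
        simp only [dotProduct, Matrix.mulVec, dotProduct, Finset.mul_sum]
        exact Finset.sum_congr rfl fun i _ => Finset.sum_congr rfl fun j _ => by ring
      have hcs := Real.sum_mul_le_sqrt_mul_sqrt Finset.univ
        (fun r : Fin n × Fin n => -(D r.1 r.2)) (fun r : Fin n × Fin n => x r.1 * x r.2)
      have h1 : Real.sqrt (∑ r : Fin n × Fin n, (-(D r.1 r.2)) ^ 2) = t := by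
        rw [ht, hD]
        congr 1
        rw [Fintype.sum_prod_type]
        refine Finset.sum_congr rfl fun i _ => Finset.sum_congr rfl fun j _ => ?_
        simp [Matrix.sub_apply]
        ring
      have h2 : Real.sqrt (∑ r : Fin n × Fin n, (x r.1 * x r.2) ^ 2) = ∑ i, x i ^ 2 := by
        rw [Fintype.sum_prod_type]
        simp only [mul_pow]
        rw [← Finset.sum_mul_sum]
        · rw [show (∑ i, x i ^ 2) * (∑ j, x j ^ 2) = (∑ i, x i ^ 2) ^ 2 by ring]
          exact Real.sqrt_sq (Finset.sum_nonneg fun _ _ => sq_nonneg _)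
      rw [h1, h2] at hcs
      have h3 : -(x ⬝ᵥ D *ᵥ x) ≤ t * ∑ i, x i ^ 2 := by
        rw [hquad, ← Finset.sum_neg_distrib]
        simpa [neg_mul] using hcs
      have h4 : t • (x ⬝ᵥ x) = t * ∑ i, x i ^ 2 := by
        simp [dotProduct, smul_eq_mul, sq]
      rw [h4]
      linarith
  have htr1 : (t • (1 : Matrix (Fin n) (Fin n) ℝ)).trace = t * n := by
    rw [Matrix.trace_smul, Matrix.trace_one]
    simp [smul_eq_mul]
  -- t • 1 is PSD
  have hPSD1 : (t • (1 : Matrix (Fin n) (Fin n) ℝ)).PosSemidef := by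
    rw [Matrix.posSemidef_iff_dotProduct_mulVec]
    constructor
    · simp [Matrix.IsHermitian, Matrix.conjTranspose_smul]
    · intro x
      rw [Matrix.smul_mulVec, Matrix.one_mulVec, dotProduct_smul]
      have : (0:ℝ) ≤ star x ⬝ᵥ x := dotProduct_star_self_nonneg x
      exact smul_nonneg ht0 this
  have key1 := (hF X (t • 1) hX hPSD1).1
  have key2 := (hF Y (D + t • 1) hY hPSD).2
  have hXt : X + t • (1 : Matrix (Fin n) (Fin n) ℝ) = Y + (D + t • 1) := by
    rw [hD]; abel
  -- trace bound for D + t•1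
  have htrD : D.trace ≤ n * t := by
    rw [Matrix.trace]
    calc ∑ i, D.diag i ≤ ∑ _i : Fin n, t := by
          refine Finset.sum_le_sum fun i _ => ?_
          calc D.diag i ≤ |D i i| := le_abs_self _
            _ ≤ t := by rw [ht, hD]; simpa using entry_le_sqrt (X - Y) i i
      _ = n * t := by simp [Finset.sum_const, nsmul_eq_mul]
  have htrP : (D + t • (1 : Matrix (Fin n) (Fin n) ℝ)).trace ≤ 2 * n * t := by
    rw [Matrix.trace_add, htr1]
    linarith
  have h5 : 0 ≤ a * (t • (1 : Matrix (Fin n) (Fin n) ℝ)).trace := by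
    rw [htr1]
    positivity
  rw [hXt] at key1
  have hfinal : F X - F Y ≤ A * (D + t • (1 : Matrix (Fin n) (Fin n) ℝ)).trace := by
    linarith
  calc F X - F Y ≤ A * (D + t • (1 : Matrix (Fin n) (Fin n) ℝ)).trace := hfinal
    _ ≤ A * (2 * n * t) := by
        exact mul_le_mul_of_nonneg_left htrP (le_of_lt hA)
    _ = 2 * A * n * t := by ring

theorem property_P1 (N : ℕ) (a A : ℝ) (ha : 0 < a) (haA : a ≤ A) (α : ℝ) (hα : 0 ≤ α)
    (F : Matrix (Fin N) (Fin N) ℝ → ℝ) (hF0 : F 0 = 0)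
    (hF : ∀ M P : Matrix (Fin N) (Fin N) ℝ, M.IsSymm → P.PosSemidef →
      a * P.trace ≤ F (M + P) - F M ∧ F (M + P) - F M ≤ A * P.trace) :
    ∃ c > (0 : ℝ), ∀ (p q : Fin N → ℝ) (M : Matrix (Fin N) (Fin N) ℝ), M.IsSymm →
      |F (Theta α p * M * Theta α p) - F (Theta α q * M * Theta α q)|
        ≤ c * ((Real.sqrt (∑ i, (p i) ^ 2)) ^ (α / 2) + (Real.sqrt (∑ i, (q i) ^ 2)) ^ (α / 2))
            * (∑ i, abs (|p i| ^ (α / 2) - |q i| ^ (α / 2)))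
            * Real.sqrt (∑ i, ∑ j, (M i j) ^ 2) := by
  have hA : 0 < A := lt_of_lt_of_le ha haA
  refine ⟨2 * A * N + 1, by positivity, ?_⟩
  intro p q M hM
  set θp : Fin N → ℝ := fun i => |p i| ^ (α / 2) with hθp
  set θq : Fin N → ℝ := fun i => |q i| ^ (α / 2) with hθq
  set Tp : ℝ := (Real.sqrt (∑ i, (p i) ^ 2)) ^ (α / 2) with hTp
  set Tq : ℝ := (Real.sqrt (∑ i, (q i) ^ 2)) ^ (α / 2) with hTq
  set S : ℝ := ∑ i, |θp i - θq i| with hS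
  set X : Matrix (Fin N) (Fin N) ℝ := Theta α p * M * Theta α p with hX
  set Y : Matrix (Fin N) (Fin N) ℝ := Theta α q * M * Theta α q with hY
  have hα2 : 0 ≤ α / 2 := by linarith
  -- symmetry of X and Y
  have symmQ : ∀ r : Fin N → ℝ, (Theta α r * M * Theta α r).IsSymm := by
    intro r
    unfold Matrix.IsSymm
    rw [Matrix.transpose_mul, Matrix.transpose_mul]
    unfold Theta
    rw [Matrix.diagonal_transpose, hM, Matrix.mul_assoc]
  have hXsym : X.IsSymm := symmQ p
  have hYsym : Y.IsSymm := symmQ q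
  -- entrywise formulas
  have hXe : ∀ i j, X i j = θp i * M i j * θp j := by
    intro i j
    show (Theta α p * M * Theta α p) i j = _
    unfold Theta
    rw [Matrix.mul_diagonal, Matrix.diagonal_mul]
  have hYe : ∀ i j, Y i j = θq i * M i j * θq j := by
    intro i j
    show (Theta α q * M * Theta α q) i j = _
    unfold Theta
    rw [Matrix.mul_diagonal, Matrix.diagonal_mul]
  -- bounds
  have hθpT : ∀ j, θp j ≤ Tp := by
    intro j
    apply Real.rpow_le_rpow (abs_nonneg _) _ hα2
    rw [← Real.sqrt_sq_eq_abs]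
    apply Real.sqrt_le_sqrt
    exact Finset.single_le_sum (f := fun i => p i ^ 2) (fun _ _ => sq_nonneg _)
      (Finset.mem_univ j)
  have hθqT : ∀ j, θq j ≤ Tq := by
    intro j
    apply Real.rpow_le_rpow (abs_nonneg _) _ hα2
    rw [← Real.sqrt_sq_eq_abs]
    apply Real.sqrt_le_sqrt
    exact Finset.single_le_sum (f := fun i => q i ^ 2) (fun _ _ => sq_nonneg _)
      (Finset.mem_univ j)
  have hθp0 : ∀ j, 0 ≤ θp j := fun j => Real.rpow_nonneg (abs_nonneg _) _
  have hθq0 : ∀ j, 0 ≤ θq j := fun j => Real.rpow_nonneg (abs_nonneg _) _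
  have hTp0 : 0 ≤ Tp := Real.rpow_nonneg (Real.sqrt_nonneg _) _
  have hTq0 : 0 ≤ Tq := Real.rpow_nonneg (Real.sqrt_nonneg _) _
  have heS : ∀ i, |θp i - θq i| ≤ S :=
    fun i => Finset.single_le_sum (f := fun i => |θp i - θq i|)
      (fun _ _ => abs_nonneg _) (Finset.mem_univ i)
  have hS0 : 0 ≤ S := Finset.sum_nonneg fun _ _ => abs_nonneg _
  -- entrywise bound on X - Y
  have hent : ∀ i j, |X i j - Y i j| ≤ ((Tp + Tq) * S) * |M i j| := by
    intro i j
    rw [hXe, hYe]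
    have hdec : θp i * M i j * θp j - θq i * M i j * θq j
        = (θp i - θq i) * M i j * θp j + θq i * M i j * (θp j - θq j) := by ring
    rw [hdec]
    calc |(θp i - θq i) * M i j * θp j + θq i * M i j * (θp j - θq j)|
        ≤ |(θp i - θq i) * M i j * θp j| + |θq i * M i j * (θp j - θq j)| := abs_add_le _ _
      _ = |θp i - θq i| * |M i j| * θp j + θq i * |M i j| * |θp j - θq j| := by
          rw [abs_mul, abs_mul, abs_mul, abs_mul, abs_of_nonneg (hθp0 j),
            abs_of_nonneg (hθq0 i)]
      _ ≤ S * |M i j| * Tp + Tq * |M i j| * S := by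
          gcongr
          · exact heS i
          · exact hθpT j
          · exact hθqT i
          · exact heS j
      _ = ((Tp + Tq) * S) * |M i j| := by ring
  -- Frobenius-type bound
  have hfrob : Real.sqrt (∑ i, ∑ j, (X i j - Y i j) ^ 2)
      ≤ ((Tp + Tq) * S) * Real.sqrt (∑ i, ∑ j, (M i j) ^ 2) := by
    have hC : 0 ≤ (Tp + Tq) * S := mul_nonneg (by linarith) hS0
    exact sqrt_sum_sq_le (fun i j => X i j - Y i j) M _ hC
      (fun i j => by simpa using hent i j)
  have hsymsum : Real.sqrt (∑ i, ∑ j, (Y i j - X i j) ^ 2)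
      = Real.sqrt (∑ i, ∑ j, (X i j - Y i j) ^ 2) := by
    congr 1
    exact Finset.sum_congr rfl fun i _ => Finset.sum_congr rfl fun j _ => by ring
  have h1 := lip ha haA hF X Y hXsym hYsym
  have h2 := lip ha haA hF Y X hYsym hXsym
  rw [hsymsum] at h2
  have habs : |F X - F Y| ≤ 2 * A * N * Real.sqrt (∑ i, ∑ j, (X i j - Y i j) ^ 2) := by
    rw [abs_le]
    constructor <;> linarith
  have hM0 : 0 ≤ Real.sqrt (∑ i, ∑ j, (M i j) ^ 2) := Real.sqrt_nonneg _
  calc |F X - F Y| ≤ 2 * A * N * Real.sqrt (∑ i, ∑ j, (X i j - Y i j) ^ 2) := habs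
    _ ≤ 2 * A * N * (((Tp + Tq) * S) * Real.sqrt (∑ i, ∑ j, (M i j) ^ 2)) := by
        apply mul_le_mul_of_nonneg_left hfrob
        positivity
    _ ≤ (2 * A * N + 1) * (Tp + Tq) * S * Real.sqrt (∑ i, ∑ j, (M i j) ^ 2) := by
        have : (0:ℝ) ≤ (Tp + Tq) * S * Real.sqrt (∑ i, ∑ j, (M i j) ^ 2) := by positivity
        nlinarith [mul_nonneg (mul_nonneg (by linarith : (0:ℝ) ≤ Tp + Tq) hS0) hM0]
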